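/- Let V = ℂ^{n+1} (n ≥ 2) with basis e₀,…,e_n, and let A ⊂ V* ⊕ S²V* be the hyperplane orthogonal to (e₀, e₂²). Then there exist Q ∈ S²V and C ∈ S³V with (Q, C) ≠ (λ e₂², μ e₂³) for any scalars λ, μ simultaneously making both pure powers of e₂ — specifically Q = (1/2)e₀² and C = e₂²e₀ — such that for every (ℓ, q) ∈ A, the vector ℓ⌟Q + q⌟C is a scalar multiple of e₂, while C is not a multiple of e₂³. -/

import Mathlib

open MvPolynomial

/-- Iterated partial derivative `∏ᵢ ∂ᵢ^{α i}` applied to `T`. -/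
noncomputable def monomialDeriv {m : ℕ} (α : Fin m →₀ ℕ) (T : MvPolynomial (Fin m) ℂ) :
    MvPolynomial (Fin m) ℂ :=
  (List.finRange m).foldl (fun p i => (fun q => MvPolynomial.pderiv i q)^[α i] p) T

noncomputable def contract {m : ℕ} (Q T : MvPolynomial (Fin m) ℂ) :
    MvPolynomial (Fin m) ℂ :=
  Q.support.sum fun α => Q.coeff α • monomialDeriv α T

section helpers

variable {m : ℕ}

private lemma foldl_deriv_id (α : Fin m →₀ ℕ) (T : MvPolynomial (Fin m) ℂ)
    (L : List (Fin m)) (h : ∀ j ∈ L, α j = 0) :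
    L.foldl (fun p i => (fun q => MvPolynomial.pderiv i q)^[α i] p) T = T := by
  induction L generalizing T with
  | nil => rfl
  | cons a l ih =>
    rw [List.foldl_cons, h a List.mem_cons_self, Function.iterate_zero, id]
    exact ih T fun j hj => h j (List.mem_cons_of_mem a hj)

private lemma foldl_deriv_one (α : Fin m →₀ ℕ) (T : MvPolynomial (Fin m) ℂ)
    (i : Fin m) (L : List (Fin m)) (hnd : L.Nodup) (hi : i ∈ L)
    (h : ∀ j ∈ L, j ≠ i → α j = 0) :
    L.foldl (fun p k => (fun q => MvPolynomial.pderiv k q)^[α k] p) T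
      = (fun q => MvPolynomial.pderiv i q)^[α i] T := by
  obtain ⟨s, t, rfl⟩ := List.append_of_mem hi
  simp only [List.nodup_append, List.nodup_cons, List.mem_cons, List.disjoint_left] at hnd
  rw [List.foldl_append, List.foldl_cons]
  rw [foldl_deriv_id α T s (fun j hj => h j (by simp [hj]) (fun hji => hnd.2.2 j hj j (by simp [hji]) rfl))]
  exact foldl_deriv_id _ _ t
    (fun j hj => h j (by simp [hj]) (fun hji => hnd.2.1.1 (hji ▸ hj)))

private lemma monomialDeriv_single (i : Fin m) (k : ℕ) (T : MvPolynomial (Fin m) ℂ) :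
    monomialDeriv (Finsupp.single i k) T = (fun q => MvPolynomial.pderiv i q)^[k] T := by
  unfold monomialDeriv
  rw [foldl_deriv_one _ T i _ (List.nodup_finRange m) (List.mem_finRange i)
    (fun j _ hji => Finsupp.single_eq_of_ne hji)]
  rw [Finsupp.single_eq_same]

private lemma foldl_deriv_two (α : Fin m →₀ ℕ) (T : MvPolynomial (Fin m) ℂ)
    (x y : Fin m) (L1 L2 L3 : List (Fin m))
    (h1 : ∀ j ∈ L1, α j = 0) (h2 : ∀ j ∈ L2, α j = 0) (h3 : ∀ j ∈ L3, α j = 0) :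
    (L1 ++ x :: (L2 ++ y :: L3)).foldl
        (fun p k => (fun q => MvPolynomial.pderiv k q)^[α k] p) T
      = (fun q => MvPolynomial.pderiv y q)^[α y]
          ((fun q => MvPolynomial.pderiv x q)^[α x] T) := by
  rw [List.foldl_append, foldl_deriv_id α T L1 h1, List.foldl_cons, List.foldl_append,
    foldl_deriv_id α _ L2 h2, List.foldl_cons, foldl_deriv_id α _ L3 h3]

private lemma monomialDeriv_pair {i j : Fin m} (hij : i ≠ j) (T : MvPolynomial (Fin m) ℂ) :
    monomialDeriv (Finsupp.single i 1 + Finsupp.single j 1) T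
      = MvPolynomial.pderiv i (MvPolynomial.pderiv j T)
    ∨ monomialDeriv (Finsupp.single i 1 + Finsupp.single j 1) T
      = MvPolynomial.pderiv j (MvPolynomial.pderiv i T) := by
  set α := Finsupp.single i 1 + Finsupp.single j 1 with hα
  have hαi : α i = 1 := by simp [hα, Finsupp.single_eq_of_ne hij]
  have hαj : α j = 1 := by simp [hα, Finsupp.single_eq_of_ne (Ne.symm hij)]
  have hα0 : ∀ k, k ≠ i → k ≠ j → α k = 0 := by
    intro k hki hkj
    simp [hα, Finsupp.single_eq_of_ne hki, Finsupp.single_eq_of_ne hkj]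
  unfold monomialDeriv
  obtain ⟨s, t, hst⟩ := List.append_of_mem (List.mem_finRange (n := m) i)
  have hj : j ∈ s ++ i :: t := hst ▸ List.mem_finRange j
  rw [List.mem_append, List.mem_cons] at hj
  have hnd : (s ++ i :: t).Nodup := hst ▸ List.nodup_finRange m
  have hdisj := List.disjoint_of_nodup_append hnd
  have hit : i ∉ t := (List.nodup_cons.mp (hnd.of_append_right)).1
  rcases hj with hjs | hj | hjt
  · -- j comes before i : list is (u ++ j :: v) ++ i :: t = u ++ j :: (v ++ i :: t)
    left
    obtain ⟨u, v, rfl⟩ := List.append_of_mem hjs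
    have hnds : (u ++ j :: v).Nodup := hnd.of_append_left
    have hju : j ∉ u := fun h =>
      (List.disjoint_of_nodup_append hnds h) List.mem_cons_self
    have hjv : j ∉ v := (List.nodup_cons.mp hnds.of_append_right).1
    have hiu : i ∉ u := fun h => hdisj (List.mem_append_left _ h) List.mem_cons_self
    have hiv : i ∉ v := fun h =>
      hdisj (List.mem_append_right _ (List.mem_cons_of_mem j h)) List.mem_cons_self
    have hjt' : j ∉ t := fun h =>
      hdisj (List.mem_append_right _ List.mem_cons_self) (List.mem_cons_of_mem i h)
    rw [hst, List.append_assoc, List.cons_append]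
    rw [foldl_deriv_two α T j i u v t
      (fun k hk => hα0 k (fun h => hiu (h ▸ hk)) (fun h => hju (h ▸ hk)))
      (fun k hk => hα0 k (fun h => hiv (h ▸ hk)) (fun h => hjv (h ▸ hk)))
      (fun k hk => hα0 k (fun h => hit (h ▸ hk)) (fun h => hjt' (h ▸ hk)))]
    rw [hαi, hαj]
    rfl
  · exact absurd hj.symm hij
  · -- i comes before j : t = u ++ j :: v, list is s ++ i :: (u ++ j :: v)
    right
    obtain ⟨u, v, rfl⟩ := List.append_of_mem hjt
    have hndt : (u ++ j :: v).Nodup := (List.nodup_cons.mp hnd.of_append_right).2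
    have hju : j ∉ u := fun h =>
      (List.disjoint_of_nodup_append hndt h) List.mem_cons_self
    have hjv : j ∉ v := (List.nodup_cons.mp hndt.of_append_right).1
    have hiu : i ∉ u := fun h => hit (List.mem_append_left _ h)
    have hiv : i ∉ v := fun h =>
      hit (List.mem_append_right _ (List.mem_cons_of_mem j h))
    have hjs' : j ∉ s := fun h => hdisj h (List.mem_cons_of_mem i hjt)
    have his : i ∉ s := fun h => hdisj h List.mem_cons_self
    rw [hst, foldl_deriv_two α T i j s u v
      (fun k hk => hα0 k (fun h => his (h ▸ hk)) (fun h => hjs' (h ▸ hk)))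
      (fun k hk => hα0 k (fun h => hiu (h ▸ hk)) (fun h => hju (h ▸ hk)))
      (fun k hk => hα0 k (fun h => hiv (h ▸ hk)) (fun h => hjv (h ▸ hk)))]
    rw [hαi, hαj]
    rfl

private lemma deg_one (α : Fin m →₀ ℕ) (h : α.degree = 1) :
    ∃ i, α = Finsupp.single i 1 := by
  have hc : Multiset.card (Finsupp.toMultiset α) = 1 := by
    rw [Finsupp.card_toMultiset]; exact h
  obtain ⟨i, hi⟩ := Multiset.card_eq_one.mp hc
  refine ⟨i, ?_⟩
  have := Finsupp.toMultiset_eq_iff.mp hi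
  rw [this, Multiset.toFinsupp_singleton]

private lemma deg_two (α : Fin m →₀ ℕ) (h : α.degree = 2) :
    ∃ i j, α = Finsupp.single i 1 + Finsupp.single j 1 := by
  have hc : Multiset.card (Finsupp.toMultiset α) = 2 := by
    rw [Finsupp.card_toMultiset]; exact h
  obtain ⟨i, j, hij⟩ := Multiset.card_eq_two.mp hc
  refine ⟨i, j, ?_⟩
  have : α.toMultiset = ({i} : Multiset (Fin m)) + {j} := by rw [hij]; rfl
  have h2 := Finsupp.toMultiset_eq_iff.mp this
  rw [h2, AddEquiv.map_add, Multiset.toFinsupp_singleton, Multiset.toFinsupp_singleton]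

private lemma mem_deg {p : MvPolynomial (Fin m) ℂ} {d : ℕ} (hp : p.IsHomogeneous d)
    {α : Fin m →₀ ℕ} (hα : α ∈ p.support) : α.degree = d := by
  by_contra hdeg
  exact (MvPolynomial.mem_support_iff.mp hα) (hp.coeff_eq_zero hdeg)

end helpers

section contractions

variable {m : ℕ}

private lemma pderiv_X0 (i : Fin (m + 1)) :
    MvPolynomial.pderiv i (X 0 : MvPolynomial (Fin (m + 1)) ℂ) = if i = 0 then 1 else 0 := by
  by_cases h : i = 0
  · simp [h]
  · simp [h, pderiv_X_of_ne (Ne.symm h)]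

private lemma pderiv_X2sq (i : Fin (m + 1)) :
    MvPolynomial.pderiv i ((X 2 : MvPolynomial (Fin (m + 1)) ℂ) ^ 2)
      = if i = 2 then C 2 * X 2 else 0 := by
  by_cases h : i = 2
  · subst h
    rw [pderiv_pow]
    simp [map_ofNat]
  · simp [h, pderiv_pow, pderiv_X_of_ne (Ne.symm h)]

private lemma pderiv2_X2sq {i j : Fin (m + 1)} (hij : i ≠ j) :
    MvPolynomial.pderiv i (MvPolynomial.pderiv j ((X 2 : MvPolynomial (Fin (m + 1)) ℂ) ^ 2))
      = 0 := by
  rw [pderiv_X2sq]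
  by_cases h : j = 2
  · subst h
    rw [if_pos rfl, pderiv_C_mul, pderiv_X_of_ne (fun hh : (2 : Fin (m + 1)) = i => hij hh.symm),
      mul_zero]
  · rw [if_neg h, map_zero]

private lemma pderiv_X2sqX0 (h20 : (2 : Fin (m + 1)) ≠ 0) (i : Fin (m + 1)) :
    MvPolynomial.pderiv i ((X 2 : MvPolynomial (Fin (m + 1)) ℂ) ^ 2 * X 0)
      = if i = 2 then C 2 * (X 2 * X 0) else if i = 0 then X 2 ^ 2 else 0 := by
  rw [pderiv_mul, pderiv_X2sq, pderiv_X0]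
  by_cases h2 : i = 2
  · subst h2
    rw [if_pos rfl, if_pos rfl, if_neg h20, mul_zero, add_zero, mul_assoc]
  · rw [if_neg h2, if_neg h2, zero_mul, zero_add]
    by_cases h0 : i = 0
    · rw [if_pos h0, if_pos h0, mul_one]
    · rw [if_neg h0, if_neg h0, mul_zero]

private lemma pderiv2_X2sqX0 (h20 : (2 : Fin (m + 1)) ≠ 0) (i j : Fin (m + 1)) :
    MvPolynomial.pderiv i
        (MvPolynomial.pderiv j ((X 2 : MvPolynomial (Fin (m + 1)) ℂ) ^ 2 * X 0))
      = if i = 2 ∧ j = 2 then C 2 * X 0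
        else if (i = 0 ∧ j = 2) ∨ (i = 2 ∧ j = 0) then C 2 * X 2
        else 0 := by
  have h02 : (0 : Fin (m + 1)) ≠ 2 := fun h => h20 h.symm
  rw [pderiv_X2sqX0 h20]
  by_cases hj2 : j = 2
  · subst hj2
    rw [if_pos rfl, pderiv_C_mul, pderiv_mul, pderiv_X0]
    by_cases hi2 : i = 2
    · subst hi2
      rw [pderiv_X_self, if_neg h20, mul_zero, add_zero, one_mul, if_pos ⟨rfl, rfl⟩]
    · rw [pderiv_X_of_ne (fun h : (2 : Fin (m + 1)) = i => hi2 h.symm), zero_mul, zero_add]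
      by_cases hi0 : i = 0
      · subst hi0
        rw [if_pos rfl, mul_one, if_neg (fun h => h20 h.1.symm), if_pos (Or.inl ⟨rfl, rfl⟩)]
      · rw [if_neg hi0, mul_zero, mul_zero, if_neg (fun h => hi2 h.1),
          if_neg (by rintro (⟨h, -⟩ | ⟨h, -⟩) <;> [exact hi0 h; exact hi2 h])]
  · rw [if_neg hj2]
    by_cases hj0 : j = 0
    · subst hj0
      rw [if_pos rfl, pderiv_X2sq]
      by_cases hi2 : i = 2
      · subst hi2
        rw [if_pos rfl, if_neg (fun h => h02 h.2), if_pos (Or.inr ⟨rfl, rfl⟩)]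
      · rw [if_neg hi2, if_neg (fun h => hi2 h.1),
          if_neg (by rintro (⟨-, h⟩ | ⟨h, -⟩) <;> [exact h02 h; exact hi2 h])]
    · rw [if_neg hj0, map_zero, if_neg (fun h => hj2 h.2),
        if_neg (by rintro (⟨-, h⟩ | ⟨-, h⟩) <;> [exact hj2 h; exact hj0 h])]

private lemma contractL1 (ℓ : MvPolynomial (Fin (m + 1)) ℂ) (hℓ : ℓ.IsHomogeneous 1) :
    contract ℓ (X 0) = C (ℓ.coeff (Finsupp.single 0 1)) := by
  classical
  unfold contract
  refine (Finset.sum_eq_single (Finsupp.single (0 : Fin (m + 1)) 1) ?_ ?_).trans ?_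
  · intro α hα hne
    obtain ⟨i, rfl⟩ := deg_one α (mem_deg hℓ hα)
    have hi : i ≠ 0 := fun h => hne (by rw [h])
    rw [monomialDeriv_single]
    simp [pderiv_X_of_ne (Ne.symm hi)]
  · intro h
    simp [MvPolynomial.notMem_support_iff.mp h]
  · rw [monomialDeriv_single]
    simp [smul_eq_C_mul]

private lemma contractL2 (ℓ : MvPolynomial (Fin (m + 1)) ℂ) (hℓ : ℓ.IsHomogeneous 1) :
    contract ℓ ((2⁻¹ : ℂ) • X 0 ^ 2) = C (ℓ.coeff (Finsupp.single 0 1)) * X 0 := by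
  classical
  have key : ∀ i : Fin (m + 1),
      MvPolynomial.pderiv i ((2⁻¹ : ℂ) • (X 0 : MvPolynomial (Fin (m + 1)) ℂ) ^ 2)
        = if i = 0 then X 0 else 0 := by
    intro i
    rw [Derivation.map_smul, pderiv_pow, pderiv_X0]
    by_cases h : i = 0
    · subst h
      rw [if_pos rfl, if_pos rfl, mul_one, pow_one, smul_eq_C_mul,
        show ((2 : ℕ) : MvPolynomial (Fin (m + 1)) ℂ) = C 2 by push_cast; rw [map_ofNat],
        ← mul_assoc, ← C_mul]
      norm_num
    · rw [if_neg h, if_neg h, mul_zero, smul_zero]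
  unfold contract
  refine (Finset.sum_eq_single (Finsupp.single (0 : Fin (m + 1)) 1) ?_ ?_).trans ?_
  · intro α hα hne
    obtain ⟨i, rfl⟩ := deg_one α (mem_deg hℓ hα)
    have hi : i ≠ 0 := fun h => hne (by rw [h])
    rw [monomialDeriv_single]
    simp only [Function.iterate_one]
    rw [key i, if_neg hi, smul_zero]
  · intro h
    simp [MvPolynomial.notMem_support_iff.mp h]
  · rw [monomialDeriv_single]
    simp only [Function.iterate_one]
    rw [key 0, if_pos rfl, smul_eq_C_mul]

private lemma contractQ1 (h02 : (0 : Fin (m + 1)) ≠ 2)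
    (q : MvPolynomial (Fin (m + 1)) ℂ) (hq : q.IsHomogeneous 2) :
    contract q (X 2 ^ 2) = C (2 * q.coeff (Finsupp.single 2 2)) := by
  classical
  unfold contract
  refine (Finset.sum_eq_single (Finsupp.single (2 : Fin (m + 1)) 2) ?_ ?_).trans ?_
  · intro α hα hne
    obtain ⟨i, j, rfl⟩ := deg_two α (mem_deg hq hα)
    by_cases hij : i = j
    · subst hij
      have hi : i ≠ 2 := by
        rintro rfl
        exact hne (by rw [← Finsupp.single_add])
      rw [show Finsupp.single i 1 + Finsupp.single i 1 = Finsupp.single i (2 : ℕ) by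
        rw [← Finsupp.single_add]]
      rw [monomialDeriv_single]
      simp only [Function.iterate_succ, Function.iterate_one, Function.comp_apply,
        Function.iterate_zero, id_eq]
      rw [pderiv_X2sq, if_neg hi, map_zero, smul_zero]
    · rcases monomialDeriv_pair hij ((X 2 : MvPolynomial (Fin (m + 1)) ℂ) ^ 2) with h | h <;>
        rw [h]
      · rw [pderiv2_X2sq hij, smul_zero]
      · rw [pderiv2_X2sq (Ne.symm hij), smul_zero]
  · intro h
    simp [MvPolynomial.notMem_support_iff.mp h]
  · rw [monomialDeriv_single]
    simp only [Function.iterate_succ, Function.iterate_one, Function.comp_apply,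
      Function.iterate_zero, id_eq]
    rw [pderiv_X2sq, if_pos rfl, pderiv_C_mul, pderiv_X_self, mul_one, smul_eq_C_mul, ← C_mul,
      mul_comm (q.coeff _) 2]

private lemma contractQ2 (h02 : (0 : Fin (m + 1)) ≠ 2)
    (q : MvPolynomial (Fin (m + 1)) ℂ) (hq : q.IsHomogeneous 2) :
    contract q (X 2 ^ 2 * X 0)
      = C (2 * q.coeff (Finsupp.single 2 2)) * X 0
        + C (2 * q.coeff (Finsupp.single 0 1 + Finsupp.single 2 1)) * X 2 := by
  classical
  have h20 : (2 : Fin (m + 1)) ≠ 0 := fun h => h02 h.symm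
  set a : Fin (m + 1) →₀ ℕ := Finsupp.single 2 2 with ha
  set b : Fin (m + 1) →₀ ℕ := Finsupp.single 0 1 + Finsupp.single 2 1 with hb
  have hab : a ≠ b := by
    intro h
    have := congrArg (fun f : Fin (m + 1) →₀ ℕ => f 0) h
    simp [ha, hb, Finsupp.single_eq_of_ne h02] at this
  set f : (Fin (m + 1) →₀ ℕ) → MvPolynomial (Fin (m + 1)) ℂ :=
    fun α => q.coeff α • monomialDeriv α (X 2 ^ 2 * X 0) with hf
  have key : ∀ α ∈ q.support, α ∉ ({a, b} : Finset (Fin (m + 1) →₀ ℕ)) → f α = 0 := by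
    intro α hα hmem
    simp only [Finset.mem_insert, Finset.mem_singleton, not_or] at hmem
    obtain ⟨hna, hnb⟩ := hmem
    obtain ⟨i, j, rfl⟩ := deg_two α (mem_deg hq hα)
    by_cases hij : i = j
    · subst hij
      have hi : i ≠ 2 := by
        rintro rfl
        exact hna (by rw [ha, ← Finsupp.single_add])
      simp only [hf]
      rw [show Finsupp.single i 1 + Finsupp.single i 1 = Finsupp.single i (2 : ℕ) by
        rw [← Finsupp.single_add]]
      rw [monomialDeriv_single]
      simp only [Function.iterate_succ, Function.iterate_one, Function.comp_apply,
        Function.iterate_zero, id_eq]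
      rw [pderiv2_X2sqX0 h20, if_neg (fun h => hi h.1),
        if_neg (by rintro (⟨-, h⟩ | ⟨h, -⟩) <;> [exact hi h; exact hi h]), smul_zero]
    · have hzero : ∀ c d : Fin (m + 1), c ≠ d →
          Finsupp.single c 1 + Finsupp.single d 1
            = Finsupp.single i 1 + Finsupp.single j 1 →
          MvPolynomial.pderiv c
            (MvPolynomial.pderiv d ((X 2 : MvPolynomial (Fin (m + 1)) ℂ) ^ 2 * X 0)) = 0 := by
        intro c d hcd heq
        rw [pderiv2_X2sqX0 h20, if_neg (fun h => hcd (h.1.trans h.2.symm)),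
          if_neg ?_, ]
        rintro (⟨rfl, rfl⟩ | ⟨rfl, rfl⟩)
        · exact hnb (heq.symm.trans hb.symm)
        · exact hnb (heq.symm.trans ((add_comm _ _).trans hb.symm))
      rcases monomialDeriv_pair hij ((X 2 : MvPolynomial (Fin (m + 1)) ℂ) ^ 2 * X 0) with h | h <;>
        simp only [hf] <;> rw [h]
      · rw [hzero i j hij rfl, smul_zero]
      · rw [hzero j i (Ne.symm hij) (add_comm _ _), smul_zero]
  have h1 : contract q (X 2 ^ 2 * X 0) = ∑ α ∈ q.support ∩ {a, b}, f α := by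
    refine (Finset.sum_subset Finset.inter_subset_left ?_).symm
    intro x hx hnx
    exact key x hx (fun h => hnx (Finset.mem_inter.mpr ⟨hx, h⟩))
  have h2 : ∑ α ∈ q.support ∩ {a, b}, f α = ∑ α ∈ ({a, b} : Finset (Fin (m + 1) →₀ ℕ)), f α := by
    refine Finset.sum_subset Finset.inter_subset_right ?_
    intro x hx hnx
    have : q.coeff x = 0 := by
      rw [← MvPolynomial.notMem_support_iff]
      exact fun hs => hnx (Finset.mem_inter.mpr ⟨hs, hx⟩)
    simp [hf, this]
  rw [h1, h2, Finset.sum_pair hab]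
  have hfa : f a = C (2 * q.coeff a) * X 0 := by
    simp only [hf, ha]
    rw [monomialDeriv_single]
    simp only [Function.iterate_succ, Function.iterate_one, Function.comp_apply,
      Function.iterate_zero, id_eq]
    rw [pderiv2_X2sqX0 h20, if_pos ⟨rfl, rfl⟩, smul_eq_C_mul, ← mul_assoc, ← C_mul,
      mul_comm (q.coeff _) 2]
  have hfb : f b = C (2 * q.coeff b) * X 2 := by
    simp only [hf, hb]
    rcases monomialDeriv_pair (show (0 : Fin (m + 1)) ≠ 2 from h02)
        ((X 2 : MvPolynomial (Fin (m + 1)) ℂ) ^ 2 * X 0) with h | h <;> rw [h]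
    · rw [pderiv2_X2sqX0 h20, if_neg (fun hh => h02 hh.1), if_pos (Or.inl ⟨rfl, rfl⟩),
        smul_eq_C_mul, ← mul_assoc, ← C_mul, mul_comm (q.coeff _) 2]
    · rw [pderiv2_X2sqX0 h20, if_neg (fun hh => h02 hh.2), if_pos (Or.inr ⟨rfl, rfl⟩),
        smul_eq_C_mul, ← mul_assoc, ← C_mul, mul_comm (q.coeff _) 2]
  rw [hfa, hfb]

end contractions

theorem stmt19 (n : ℕ) (hn : 2 ≤ n) :
    (∀ ℓ q : MvPolynomial (Fin (n + 1)) ℂ, ℓ.IsHomogeneous 1 → q.IsHomogeneous 2 →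
      contract ℓ (X 0) + contract q (X 2 ^ 2) = 0 →
      ∃ a : ℂ, contract ℓ ((2⁻¹ : ℂ) • X 0 ^ 2) + contract q (X 2 ^ 2 * X 0) =
        a • (X 2 : MvPolynomial (Fin (n + 1)) ℂ)) ∧
    ¬ ∃ μ : ℂ, (X 2 ^ 2 * X 0 : MvPolynomial (Fin (n + 1)) ℂ) =
        μ • (X 2 : MvPolynomial (Fin (n + 1)) ℂ) ^ 3 := by
  have h20 : (2 : Fin (n + 1)) ≠ 0 := by
    have h2v : ((2 : Fin (n + 1)) : ℕ) = 2 := by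
      have : ((2 : Fin (n + 1)) : ℕ) = 2 % (n + 1) := rfl
      rw [this]
      exact Nat.mod_eq_of_lt (by omega)
    intro h
    rw [Fin.ext_iff] at h
    exact absurd (h2v.symm.trans h) (by simp)
  have h02 : (0 : Fin (n + 1)) ≠ 2 := fun h => h20 h.symm
  constructor
  · intro ℓ q hℓ hq hyp
    rw [contractL1 ℓ hℓ, contractQ1 h02 q hq] at hyp
    refine ⟨2 * q.coeff (Finsupp.single 0 1 + Finsupp.single 2 1), ?_⟩
    rw [contractL2 ℓ hℓ, contractQ2 h02 q hq, smul_eq_C_mul]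
    linear_combination (X 0 : MvPolynomial (Fin (n + 1)) ℂ) * hyp
  · rintro ⟨μ, hμ⟩
    have h1 : (X 2 ^ 2 * X 0 : MvPolynomial (Fin (n + 1)) ℂ)
        = monomial (Finsupp.single 2 2 + Finsupp.single 0 1) 1 := by
      rw [X_pow_eq_monomial, X, monomial_mul, one_mul]
    have h2 : (μ • (X 2 : MvPolynomial (Fin (n + 1)) ℂ) ^ 3)
        = monomial (Finsupp.single 2 3) μ := by
      rw [X_pow_eq_monomial, smul_monomial, smul_eq_mul, mul_one]
    rw [h1, h2] at hμ
    have := congrArg (MvPolynomial.coeff (Finsupp.single 2 2 + Finsupp.single 0 1)) hμ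
    rw [coeff_monomial, coeff_monomial, if_pos rfl, if_neg] at this
    · exact one_ne_zero this
    · intro h
      have := congrArg (fun f : Fin (n + 1) →₀ ℕ => f 0) h
      simp [Finsupp.single_eq_of_ne h20, Finsupp.single_eq_of_ne h02] at this
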